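/- In Jia's dcpo P = ℕ × ℕ × (ℕ ∪ {∞}) (order as above), the family C_j = ⋃_{k ≥ j} ↓(2,k,∞) ∪ {(1,n,∞) : n ∈ ℕ}, for j ∈ ℕ, is a filtered family of Scott closed sets each of which meets {(2,j,∞) : j ∈ ℕ}, but ⋂_j C_j ∩ {(2,j,∞) : j ∈ ℕ} = ∅. -/

import Mathlib

/-- Jia's dcpo: the underlying set `ℕ × ℕ × (ℕ ∪ {∞})` (positive naturals). -/
structure JiaP where
  i : ℕ+
  j : ℕ+
  m : WithTop ℕ+

namespace JiaP

/-- `(i₁,j₁,m₁) ≤ (i₂,j₂,m₂)` iff `i₁ = i₂, j₁ = j₂, m₁ ≤ m₂`, or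
`i₂ = i₁ + 1, m₁ ≤ j₂, m₂ = ∞`. -/
instance : PartialOrder JiaP where
  le x y := (x.i = y.i ∧ x.j = y.j ∧ x.m ≤ y.m) ∨
    (y.i = x.i + 1 ∧ x.m ≤ (y.j : WithTop ℕ+) ∧ y.m = ⊤)
  le_refl x := Or.inl ⟨rfl, rfl, le_refl _⟩
  le_trans x y z h g := by
    rcases h with ⟨h1, h2, h3⟩ | ⟨h1, h2, h3⟩ <;> rcases g with ⟨g1, g2, g3⟩ | ⟨g1, g2, g3⟩
    · exact Or.inl ⟨h1.trans g1, h2.trans g2, h3.trans g3⟩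
    · exact Or.inr ⟨by rw [g1, ← h1], h3.trans g2, g3⟩
    · exact Or.inr ⟨by rw [← g1, h1], by rw [← g2]; exact h2, top_le_iff.mp (h3 ▸ g3)⟩
    · exact absurd (top_le_iff.mp (h3 ▸ g2)) WithTop.coe_ne_top
  le_antisymm x y h g := by
    rcases h with ⟨h1, h2, h3⟩ | ⟨h1, h2, h3⟩ <;> rcases g with ⟨g1, g2, g3⟩ | ⟨g1, g2, g3⟩
    · cases x; cases y
      simp only [JiaP.mk.injEq]
      exact ⟨h1, h2, le_antisymm h3 g3⟩
    · exfalso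
      have hh := h1.symm.trans g1
      have : (y.i : ℕ) = (y.i : ℕ) + 1 := by exact_mod_cast congrArg PNat.val hh
      omega
    · exfalso
      have hh := g1.symm.trans h1
      have : (x.i : ℕ) = (x.i : ℕ) + 1 := by exact_mod_cast congrArg PNat.val hh
      omega
    · exfalso
      have hh : x.i = x.i + 1 + 1 := by rw [← h1]; exact g1
      have : (x.i : ℕ) = (x.i : ℕ) + 1 + 1 := by exact_mod_cast congrArg PNat.val hh
      omega

end JiaP

/-- The Scott closed set `C_j = ⋃_{k ≥ j} ↓(2,k,∞) ∪ {(1,n,∞) : n ∈ ℕ}`. -/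
def Cset (j : ℕ+) : Set JiaP :=
  (⋃ k ∈ {k : ℕ+ | j ≤ k}, {p : JiaP | p ≤ ⟨2, k, ⊤⟩}) ∪
    {p : JiaP | ∃ n : ℕ+, p = ⟨1, n, ⊤⟩}


namespace JiaP

lemma le_def {x y : JiaP} : x ≤ y ↔ (x.i = y.i ∧ x.j = y.j ∧ x.m ≤ y.m) ∨
    (y.i = x.i + 1 ∧ x.m ≤ (y.j : WithTop ℕ+) ∧ y.m = ⊤) := Iff.rfl

lemma succ_eq_two {x : ℕ+} (h : (2 : ℕ+) = x + 1) : x = 1 := by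
  have : (2 : ℕ) = (x : ℕ) + 1 := by exact_mod_cast congrArg PNat.val h
  have : (x : ℕ) = 1 := by omega
  exact_mod_cast this

end JiaP

lemma mem_Cset {j : ℕ+} {p : JiaP} :
    p ∈ Cset j ↔ p.i = 1 ∨ (p.i = 2 ∧ j ≤ p.j) := by
  constructor
  · rintro (h | ⟨n, rfl⟩)
    · simp only [Set.mem_iUnion] at h
      obtain ⟨k, hk, hle⟩ := h
      rcases JiaP.le_def.mp hle with ⟨h1, h2, _⟩ | ⟨h1, _, _⟩
      · exact Or.inr ⟨h1, h2 ▸ hk⟩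
      · exact Or.inl (JiaP.succ_eq_two h1)
    · exact Or.inl rfl
  · rintro (h | ⟨h1, h2⟩)
    · cases hm : p.m with
      | top =>
        refine Or.inr ⟨p.j, ?_⟩
        cases p; simp_all
      | coe c =>
        refine Or.inl ?_
        simp only [Set.mem_iUnion]
        refine ⟨max j c, (show j ≤ max j c from le_max_left _ _), Or.inr ⟨by rw [h]; rfl, ?_, rfl⟩⟩
        rw [hm]
        exact_mod_cast le_max_right j c
    · refine Or.inl ?_
      simp only [Set.mem_iUnion]
      exact ⟨p.j, h2, Or.inl ⟨h1, rfl, le_top⟩⟩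

lemma Cset_anti {j j' : ℕ+} (h : j ≤ j') : Cset j' ⊆ Cset j := by
  intro p hp
  rcases mem_Cset.mp hp with h1 | ⟨h1, h2⟩
  · exact mem_Cset.mpr (Or.inl h1)
  · exact mem_Cset.mpr (Or.inr ⟨h1, h.trans h2⟩)

/-- The sets `C_j`, `j ∈ ℕ`, form a filtered family of Scott closed subsets of Jia's dcpo,
each of which meets `{(2,j,∞) : j ∈ ℕ}`, yet `⋂_j C_j` is disjoint from `{(2,j,∞) : j ∈ ℕ}`. -/
theorem JiaP_filtered_closed_family :
    DirectedOn (fun A B : Set JiaP => B ⊆ A) (Set.range Cset) ∧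
    (∀ j : ℕ+, @IsClosed JiaP (Topology.scott JiaP Set.univ) (Cset j)) ∧
    (∀ j : ℕ+, (Cset j ∩ {p : JiaP | ∃ k : ℕ+, p = ⟨2, k, ⊤⟩}).Nonempty) ∧
    (⋂ j : ℕ+, Cset j) ∩ {p : JiaP | ∃ k : ℕ+, p = ⟨2, k, ⊤⟩} = ∅ := by
  classical
  letI := Topology.scott JiaP Set.univ
  haveI : Topology.IsScott JiaP Set.univ := ⟨rfl⟩
  refine ⟨?_, ?_, ?_, ?_⟩
  · rintro A ⟨j1, rfl⟩ B ⟨j2, rfl⟩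
    exact ⟨Cset (max j1 j2), ⟨max j1 j2, rfl⟩,
      Cset_anti (le_max_left _ _), Cset_anti (le_max_right _ _)⟩
  · intro j
    rw [Topology.IsScott.isClosed_iff_isLowerSet_and_dirSupClosed]
    constructor
    · intro q p hpq hq
      rcases mem_Cset.mp hq with h1 | ⟨h1, h2⟩
      · rcases JiaP.le_def.mp hpq with ⟨g1, g2, _⟩ | ⟨g1, _, _⟩
        · exact mem_Cset.mpr (Or.inl (g1.trans h1))
        · exfalso
          have hq : (1 : ℕ) = (p.i : ℕ) + 1 := by
            exact_mod_cast congrArg PNat.val (h1 ▸ g1)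
          have hpos := p.i.ne_zero
          omega
      · rcases JiaP.le_def.mp hpq with ⟨g1, g2, _⟩ | ⟨g1, _, _⟩
        · exact mem_Cset.mpr (Or.inr ⟨g1.trans h1, g2 ▸ h2⟩)
        · exact mem_Cset.mpr (Or.inl (JiaP.succ_eq_two (h1 ▸ g1)))
    · intro d hsub hne hdir a hlub
      -- key: if every x ∈ d is ≤ a via the second (jump) clause, contradiction
      have key : ¬ (∀ x ∈ d, a.i = x.i + 1 ∧ x.m ≤ (a.j : WithTop ℕ+) ∧ a.m = ⊤) := by
        intro hall
        have hub : (⟨a.i, a.j + 1, ⊤⟩ : JiaP) ∈ upperBounds d := by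
          intro x hx
          obtain ⟨e1, e2, _⟩ := hall x hx
          refine JiaP.le_def.mpr (Or.inr ⟨e1, ?_, rfl⟩)
          exact e2.trans (by exact_mod_cast (le_of_lt (PNat.lt_add_one_iff.mpr le_rfl)))
        have := hlub.2 hub
        rcases JiaP.le_def.mp this with ⟨_, e2, _⟩ | ⟨e1, _, _⟩
        · have : (a.j : ℕ) = (a.j : ℕ) + 1 := by exact_mod_cast congrArg PNat.val e2
          omega
        · have : (a.i : ℕ) = (a.i : ℕ) + 1 := by
            exact_mod_cast congrArg PNat.val e1
          omega
      by_cases hex : ∃ b ∈ d, b.i = 2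
      · obtain ⟨b, hbd, hb2⟩ := hex
        have hj : j ≤ b.j := by
          rcases mem_Cset.mp (hsub hbd) with h1 | ⟨_, h2⟩
          · exact absurd (hb2 ▸ h1) (by decide)
          · exact h2
        rcases JiaP.le_def.mp (hlub.1 hbd) with ⟨e1, e2, _⟩ | ⟨e1, e2, e3⟩
        · exact mem_Cset.mpr (Or.inr ⟨e1 ▸ hb2, e2 ▸ hj⟩)
        · -- a.i = 3; show every x ∈ d is via jump clause, contradiction
          exfalso
          apply key
          intro x hx
          rcases JiaP.le_def.mp (hlub.1 hx) with ⟨f1, f2, f3⟩ | hf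
          · exfalso
            rcases mem_Cset.mp (hsub hx) with g1 | ⟨g1, _⟩
            · -- x.i = 1 but x.i = a.i = b.i + 1 = 3
              have hq : (1 : ℕ) = (b.i : ℕ) + 1 := by
                exact_mod_cast congrArg PNat.val ((g1.symm.trans f1).trans e1)
              have hpos := b.i.ne_zero
              omega
            · have hq : (2 : ℕ) = (b.i : ℕ) + 1 := by
                exact_mod_cast congrArg PNat.val ((g1.symm.trans f1).trans e1)
              have hb2' : (b.i : ℕ) = 2 := congrArg PNat.val hb2
              omega
          · exact hf
      · push_neg at hex
        have hall1 : ∀ x ∈ d, x.i = 1 := by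
          intro x hx
          rcases mem_Cset.mp (hsub hx) with h1 | ⟨h1, _⟩
          · exact h1
          · exact absurd h1 (hex x hx)
        by_cases ha1 : a.i = 1
        · exact mem_Cset.mpr (Or.inl ha1)
        · exfalso
          apply key
          intro x hx
          rcases JiaP.le_def.mp (hlub.1 hx) with ⟨f1, _, _⟩ | hf
          · exact absurd (f1.symm.trans (hall1 x hx)) ha1
          · exact hf
  · intro j
    refine ⟨⟨2, j, ⊤⟩, ?_, j, rfl⟩
    exact mem_Cset.mpr (Or.inr ⟨rfl, le_rfl⟩)
  · ext p
    simp only [Set.mem_inter_iff, Set.mem_iInter, Set.mem_setOf_eq, Set.mem_empty_iff_false,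
      iff_false, not_and]
    rintro hp ⟨k, rfl⟩
    rcases mem_Cset.mp (hp (k + 1)) with h1 | ⟨_, h2⟩
    · have h1' : (2 : ℕ+) = 1 := h1
      exact absurd h1' (by decide)
    · simp only at h2
      have : (k : ℕ) + 1 ≤ (k : ℕ) := by exact_mod_cast h2
      omega
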